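/- Let ψ¹_1,…,ψ¹_N and ψ²_1,…,ψ²_N be unit vectors in a finite-dimensional complex Hilbert space, with nonzero pairwise inner products ⟨ψ²_{j'}, ψ²_j⟩, and suppose there exist operators A_k with ∑_k A_k† A_k = 1 and A_k ψ¹_j = c_{jk} ψ²_j for scalars c_{jk}. Then |⟨ψ²_{j'}, ψ²_j⟩| ≥ |⟨ψ¹_{j'}, ψ¹_j⟩| for all j, j'. -/

import Mathlib

open scoped InnerProductSpace

/-- The rank-one operator `|φ⟩⟨χ| : v ↦ ⟨χ, v⟩ φ`. -/
noncomputable def outer {H : Type*} [NormedAddCommGroup H] [InnerProductSpace ℂ H]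
    (φ χ : H) : H →ₗ[ℂ] H where
  toFun v := ⟪χ, v⟫_ℂ • φ
  map_add' x y := by simp [inner_add_right, add_smul]
  map_smul' c x := by simp [inner_smul_right, smul_smul]

theorem stmt_4 {H : Type*} [NormedAddCommGroup H] [InnerProductSpace ℂ H]
    [FiniteDimensional ℂ H] {N m : ℕ} (ψ1 ψ2 : Fin N → H)
    (h1 : ∀ j, ‖ψ1 j‖ = 1) (h2 : ∀ j, ‖ψ2 j‖ = 1)
    (hnz : ∀ j j', ⟪ψ2 j', ψ2 j⟫_ℂ ≠ 0)
    (A : Fin m → (H →ₗ[ℂ] H))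
    (hA : ∑ k, LinearMap.adjoint (A k) ∘ₗ A k = LinearMap.id)
    (c : Fin N → Fin m → ℂ) (hc : ∀ j k, A k (ψ1 j) = c j k • ψ2 j) :
    ∀ j j', ‖⟪ψ1 j', ψ1 j⟫_ℂ‖ ≤ ‖⟪ψ2 j', ψ2 j⟫_ℂ‖ := by
  -- key identity
  have key : ∀ j j', ⟪ψ1 j', ψ1 j⟫_ℂ
      = (∑ k, starRingEnd ℂ (c j' k) * c j k) * ⟪ψ2 j', ψ2 j⟫_ℂ := by
    intro j j'
    have : ⟪ψ1 j', ψ1 j⟫_ℂ = ⟪ψ1 j', (∑ k, LinearMap.adjoint (A k) ∘ₗ A k) (ψ1 j)⟫_ℂ := by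
      rw [hA]; simp
    rw [this]
    simp only [LinearMap.sum_apply, LinearMap.comp_apply, inner_sum,
      LinearMap.adjoint_inner_right]
    rw [Finset.sum_mul]
    congr 1; funext k
    rw [hc, hc, inner_smul_left, inner_smul_right]
    ring
  intro j j'
  -- rows of c are unit vectors
  have hrow : ∀ j, (∑ k, starRingEnd ℂ (c j k) * c j k) = 1 := by
    intro j
    have h := key j j
    rw [inner_self_eq_norm_sq_to_K, inner_self_eq_norm_sq_to_K, h1, h2] at h
    simpa using h.symm
  -- Cauchy–Schwarz in ℂ^m
  set a : EuclideanSpace ℂ (Fin m) := WithLp.toLp 2 (fun k => c j' k)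
  set b : EuclideanSpace ℂ (Fin m) := WithLp.toLp 2 (fun k => c j k)
  have hna : ‖a‖ = 1 := by
    have : (⟪a, a⟫_ℂ : ℂ) = 1 := by
      rw [PiLp.inner_apply]; simpa [a, mul_comm, RCLike.mul_conj] using hrow j'
    have h2' := inner_self_eq_norm_sq (𝕜 := ℂ) a
    rw [this] at h2'
    simp at h2'
    nlinarith [norm_nonneg a]
  have hnb : ‖b‖ = 1 := by
    have : (⟪b, b⟫_ℂ : ℂ) = 1 := by
      rw [PiLp.inner_apply]; simpa [b, mul_comm, RCLike.mul_conj] using hrow j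
    have h2' := inner_self_eq_norm_sq (𝕜 := ℂ) b
    rw [this] at h2'
    simp at h2'
    nlinarith [norm_nonneg b]
  have hCS : ‖(⟪a, b⟫_ℂ : ℂ)‖ ≤ 1 := by
    calc ‖(⟪a, b⟫_ℂ : ℂ)‖ ≤ ‖a‖ * ‖b‖ := norm_inner_le_norm a b
    _ = 1 := by rw [hna, hnb]; ring
  have hab : (⟪a, b⟫_ℂ : ℂ) = ∑ k, starRingEnd ℂ (c j' k) * c j k := by
    simp [a, b, PiLp.inner_apply, mul_comm]
  rw [key j j', norm_mul]
  calc ‖∑ k, starRingEnd ℂ (c j' k) * c j k‖ * ‖⟪ψ2 j', ψ2 j⟫_ℂ‖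
      ≤ 1 * ‖⟪ψ2 j', ψ2 j⟫_ℂ‖ := by
        apply mul_le_mul_of_nonneg_right _ (norm_nonneg _)
        rw [← hab]; exact hCS
    _ = ‖⟪ψ2 j', ψ2 j⟫_ℂ‖ := one_mul _
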